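/- Let $A$ be a bialgebra, $H$ a Hopf algebra, and $\sigma : H \to A$ a bialgebra monomorphism. If $\gamma : A\otimes A \to K$ is an $H$-bilinear unital 2-cocycle for $A$ (i.e. $\gamma(\sigma(h)x \otimes y\sigma(h')) = \varepsilon(h)\gamma(x\otimes y)\varepsilon(h')$), then: (i) $\gamma$ is $H$-balanced, i.e. $\gamma(x\sigma(h)\otimes y) = \gamma(x\otimes \sigma(h)y)$ for all $x,y\in A$, $h\in H$; and (ii) the convolution inverse $\gamma^{-1}$ is also $H$-bilinear and $H$-balanced. -/

import Mathlib

open TensorProduct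

variable {K A H : Type*}

section Defs

variable [CommRing K] [Ring A] [Bialgebra K A]

/-- The comultiplication of the tensor product coalgebra `A ⊗ A`. -/
noncomputable def comul2 : (A ⊗[K] A) →ₗ[K] (A ⊗[K] A) ⊗[K] (A ⊗[K] A) :=
  (TensorProduct.tensorTensorTensorComm K A A A A).toLinearMap ∘ₗ
    (TensorProduct.map Coalgebra.comul Coalgebra.comul)

/-- The counit of the tensor product coalgebra `A ⊗ A`. -/
noncomputable def counit2 : (A ⊗[K] A) →ₗ[K] K :=
  (TensorProduct.lid K K).toLinearMap ∘ₗ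
    (TensorProduct.map Coalgebra.counit Coalgebra.counit)

/-- The comultiplication of the tensor product coalgebra `A ⊗ (A ⊗ A)`. -/
noncomputable def comul3 : (A ⊗[K] (A ⊗[K] A)) →ₗ[K]
    (A ⊗[K] (A ⊗[K] A)) ⊗[K] (A ⊗[K] (A ⊗[K] A)) :=
  (TensorProduct.tensorTensorTensorComm K A A (A ⊗[K] A) (A ⊗[K] A)).toLinearMap ∘ₗ
    (TensorProduct.map Coalgebra.comul comul2)

/-- Convolution product on linear maps `A ⊗ A → K`. -/
noncomputable def conv2 (f g : (A ⊗[K] A) →ₗ[K] K) : (A ⊗[K] A) →ₗ[K] K :=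
  (TensorProduct.lid K K).toLinearMap ∘ₗ (TensorProduct.map f g) ∘ₗ comul2

/-- Convolution product on linear maps `A ⊗ (A ⊗ A) → K`. -/
noncomputable def conv3 (f g : (A ⊗[K] (A ⊗[K] A)) →ₗ[K] K) :
    (A ⊗[K] (A ⊗[K] A)) →ₗ[K] K :=
  (TensorProduct.lid K K).toLinearMap ∘ₗ (TensorProduct.map f g) ∘ₗ comul3

/-- The 2-cocycle equation for `γ` for the bialgebra `A`:
`γ(y₁ ⊗ z₁) γ(x ⊗ y₂z₂) = γ(x₁ ⊗ y₁) γ(x₂y₂ ⊗ z)`, in convolution form. -/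
noncomputable def IsCocycleEq (γ : (A ⊗[K] A) →ₗ[K] K) : Prop :=
  conv3 ((TensorProduct.lid K K).toLinearMap ∘ₗ TensorProduct.map Coalgebra.counit γ)
      (γ ∘ₗ TensorProduct.map LinearMap.id (LinearMap.mul' K A)) =
    conv3 (((TensorProduct.lid K K).toLinearMap ∘ₗ TensorProduct.map γ Coalgebra.counit)
        ∘ₗ (TensorProduct.assoc K A A A).symm.toLinearMap)
      ((γ ∘ₗ TensorProduct.map (LinearMap.mul' K A) LinearMap.id) ∘ₗ
        (TensorProduct.assoc K A A A).symm.toLinearMap)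

/-- The normalization condition `γ(x ⊗ 1) = γ(1 ⊗ x) = ε(x)`. -/
def IsUnital (γ : (A ⊗[K] A) →ₗ[K] K) : Prop :=
  ∀ x : A, γ (x ⊗ₜ[K] (1 : A)) = Coalgebra.counit (R := K) x ∧
    γ ((1 : A) ⊗ₜ[K] x) = Coalgebra.counit (R := K) x

end Defs

/-! ### Auxiliary theory: tensor products of coalgebras and convolution. -/

namespace HCAux

open LinearMap Coalgebra

set_option linter.unusedSectionVars false

variable {K : Type*} [CommRing K]

section TC

variable {M N : Type*} [AddCommMonoid M] [AddCommMonoid N]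
  [Module K M] [Module K N] [Coalgebra K M] [Coalgebra K N]

/-- comultiplication on a tensor product of coalgebras -/
noncomputable def tcomul : M ⊗[K] N →ₗ[K] (M ⊗[K] N) ⊗[K] (M ⊗[K] N) :=
  (TensorProduct.tensorTensorTensorComm K M M N N).toLinearMap ∘ₗ
    (TensorProduct.map Coalgebra.comul Coalgebra.comul)

/-- counit on a tensor product of coalgebras -/
noncomputable def tcounit : (M ⊗[K] N) →ₗ[K] K :=
  (TensorProduct.lid K K).toLinearMap ∘ₗ
    (TensorProduct.map Coalgebra.counit Coalgebra.counit)

lemma tcomul_tmul (m : M) (n : N) :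
    tcomul (K := K) (m ⊗ₜ[K] n) =
      TensorProduct.tensorTensorTensorComm K M M N N (comul m ⊗ₜ[K] comul n) := rfl

lemma tcounit_tmul (m : M) (n : N) :
    tcounit (K := K) (m ⊗ₜ[K] n) = counit (R := K) m * counit (R := K) n := by
  simp [tcounit, smul_eq_mul]

lemma perm1 (s : M ⊗[K] M) (t : N ⊗[K] N) (b : M) (d : N) :
    TensorProduct.assoc K (M ⊗[K] N) (M ⊗[K] N) (M ⊗[K] N)
        ((TensorProduct.tensorTensorTensorComm K M M N N (s ⊗ₜ t)) ⊗ₜ (b ⊗ₜ d)) =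
      lTensor (M ⊗[K] N) (TensorProduct.tensorTensorTensorComm K M M N N).toLinearMap
        (TensorProduct.tensorTensorTensorComm K M (M ⊗[K] M) N (N ⊗[K] N)
          ((TensorProduct.assoc K M M M (s ⊗ₜ b)) ⊗ₜ (TensorProduct.assoc K N N N (t ⊗ₜ d)))) := by
  induction s using TensorProduct.induction_on with
  | zero => simp
  | tmul a b' =>
    induction t using TensorProduct.induction_on with
    | zero => simp
    | tmul c d' => simp
    | add t1 t2 h1 h2 => simp_all [tmul_add, add_tmul]
  | add s1 s2 h1 h2 => simp_all [tmul_add, add_tmul]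

lemma perm2 (u : M ⊗[K] M) (v : N ⊗[K] N) :
    TensorProduct.assoc K (M ⊗[K] N) (M ⊗[K] N) (M ⊗[K] N)
        (rTensor (M ⊗[K] N) (tcomul (K := K))
          (TensorProduct.tensorTensorTensorComm K M M N N (u ⊗ₜ v))) =
      lTensor (M ⊗[K] N) (TensorProduct.tensorTensorTensorComm K M M N N).toLinearMap
        (TensorProduct.tensorTensorTensorComm K M (M ⊗[K] M) N (N ⊗[K] N)
          ((TensorProduct.assoc K M M M (rTensor M comul u)) ⊗ₜ
            (TensorProduct.assoc K N N N (rTensor N comul v)))) := by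
  induction u using TensorProduct.induction_on with
  | zero => simp
  | tmul a b =>
    induction v using TensorProduct.induction_on with
    | zero => simp
    | tmul c d =>
      simp only [TensorProduct.tensorTensorTensorComm_tmul, rTensor_tmul, tcomul_tmul]
      exact perm1 (comul a) (comul c) b d
    | add t1 t2 h1 h2 => simp_all [tmul_add, add_tmul]
  | add s1 s2 h1 h2 => simp_all [tmul_add, add_tmul]

lemma perm3 (u : M ⊗[K] M) (v : N ⊗[K] N) :
    lTensor (M ⊗[K] N) (tcomul (K := K))
        (TensorProduct.tensorTensorTensorComm K M M N N (u ⊗ₜ v)) =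
      lTensor (M ⊗[K] N) (TensorProduct.tensorTensorTensorComm K M M N N).toLinearMap
        (TensorProduct.tensorTensorTensorComm K M (M ⊗[K] M) N (N ⊗[K] N)
          ((lTensor M comul u) ⊗ₜ (lTensor N comul v))) := by
  induction u using TensorProduct.induction_on with
  | zero => simp
  | tmul a b =>
    induction v using TensorProduct.induction_on with
    | zero => simp
    | tmul c d => simp [tcomul_tmul]
    | add t1 t2 h1 h2 => simp_all [tmul_add, add_tmul]
  | add s1 s2 h1 h2 => simp_all [tmul_add, add_tmul]

lemma perm4 (u : M ⊗[K] M) (v : N ⊗[K] N) :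
    rTensor (M ⊗[K] N) (tcounit (K := K))
        (TensorProduct.tensorTensorTensorComm K M M N N (u ⊗ₜ v)) =
      TensorProduct.map (LinearMap.mul' K K) LinearMap.id
        (TensorProduct.tensorTensorTensorComm K K M K N
          ((rTensor M counit u) ⊗ₜ (rTensor N counit v))) := by
  induction u using TensorProduct.induction_on with
  | zero => simp
  | tmul a b =>
    induction v using TensorProduct.induction_on with
    | zero => simp
    | tmul c d => simp [tcounit_tmul]
    | add t1 t2 h1 h2 => simp_all [tmul_add, add_tmul]
  | add s1 s2 h1 h2 => simp_all [tmul_add, add_tmul]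

lemma perm5 (u : M ⊗[K] M) (v : N ⊗[K] N) :
    lTensor (M ⊗[K] N) (tcounit (K := K))
        (TensorProduct.tensorTensorTensorComm K M M N N (u ⊗ₜ v)) =
      TensorProduct.map LinearMap.id (LinearMap.mul' K K)
        (TensorProduct.tensorTensorTensorComm K M K N K
          ((lTensor M counit u) ⊗ₜ (lTensor N counit v))) := by
  induction u using TensorProduct.induction_on with
  | zero => simp
  | tmul a b =>
    induction v using TensorProduct.induction_on with
    | zero => simp
    | tmul c d => simp [tcounit_tmul]
    | add t1 t2 h1 h2 => simp_all [tmul_add, add_tmul]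
  | add s1 s2 h1 h2 => simp_all [tmul_add, add_tmul]

/-- The tensor product of two coalgebras is a coalgebra (universe polymorphic). -/
noncomputable instance (priority := 2000) tc : Coalgebra K (M ⊗[K] N) where
  comul := (TensorProduct.tensorTensorTensorComm K M M N N).toLinearMap ∘ₗ
    (TensorProduct.map Coalgebra.comul Coalgebra.comul)
  counit := (TensorProduct.lid K K).toLinearMap ∘ₗ
    (TensorProduct.map Coalgebra.counit Coalgebra.counit)
  coassoc := by
    apply TensorProduct.ext'
    intro m n
    show TensorProduct.assoc K _ _ _ (rTensor _ tcomul (tcomul (m ⊗ₜ[K] n)))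
      = lTensor _ tcomul (tcomul (m ⊗ₜ[K] n))
    rw [tcomul_tmul, perm2, perm3, coassoc_apply, coassoc_apply]
  rTensor_counit_comp_comul := by
    apply TensorProduct.ext'
    intro m n
    show rTensor _ tcounit (tcomul (m ⊗ₜ[K] n)) = 1 ⊗ₜ[K] (m ⊗ₜ[K] n)
    rw [tcomul_tmul, perm4]
    have h1 : rTensor M (counit (R := K)) (comul m) = 1 ⊗ₜ[K] m := rTensor_counit_comul m
    have h2 : rTensor N (counit (R := K)) (comul n) = 1 ⊗ₜ[K] n := rTensor_counit_comul n
    rw [h1, h2]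
    simp
  lTensor_counit_comp_comul := by
    apply TensorProduct.ext'
    intro m n
    show lTensor _ tcounit (tcomul (m ⊗ₜ[K] n)) = (m ⊗ₜ[K] n) ⊗ₜ[K] 1
    rw [tcomul_tmul, perm5]
    have h1 : lTensor M (counit (R := K)) (comul m) = m ⊗ₜ[K] 1 := lTensor_counit_comul m
    have h2 : lTensor N (counit (R := K)) (comul n) = n ⊗ₜ[K] 1 := lTensor_counit_comul n
    rw [h1, h2]
    simp

/-- prefer `tc` over Mathlib's tensor product coalgebra structure -/
noncomputable instance (priority := 3000) tcs : CoalgebraStruct K (M ⊗[K] N) :=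
  tc.toCoalgebraStruct

@[simp] lemma comul_tmul (m : M) (n : N) :
    comul (R := K) (m ⊗ₜ[K] n) =
      TensorProduct.tensorTensorTensorComm K M M N N (comul m ⊗ₜ[K] comul n) := rfl

@[simp] lemma counit_tmul (m : M) (n : N) :
    counit (R := K) (m ⊗ₜ[K] n) = counit (R := K) m * counit (R := K) n :=
  tcounit_tmul m n

end TC

section Conv

variable {C : Type*} [AddCommMonoid C] [Module K C] [Coalgebra K C]

/-- convolution product on the dual of a coalgebra -/
noncomputable def conv (f g : C →ₗ[K] K) : C →ₗ[K] K :=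
  (TensorProduct.lid K K).toLinearMap ∘ₗ (TensorProduct.map f g) ∘ₗ Coalgebra.comul

lemma conv_apply (f g : C →ₗ[K] K) (c : C) :
    conv f g c = TensorProduct.lid K K (TensorProduct.map f g (comul c)) := rfl

lemma conv_counit_left (f : C →ₗ[K] K) : conv counit f = f := by
  ext c
  have : TensorProduct.map (counit (R := K)) f (comul c)
      = lTensor K f (rTensor C counit (comul c)) := by
    generalize comul (R := K) c = w
    induction w using TensorProduct.induction_on with
    | zero => simp
    | tmul a b => simp
    | add x y hx hy => simp_all
  rw [conv_apply, this, rTensor_counit_comul]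
  simp

lemma conv_counit_right (f : C →ₗ[K] K) : conv f counit = f := by
  ext c
  have : TensorProduct.map f (counit (R := K)) (comul c)
      = rTensor K f (lTensor C counit (comul c)) := by
    generalize comul (R := K) c = w
    induction w using TensorProduct.induction_on with
    | zero => simp
    | tmul a b => simp
    | add x y hx hy => simp_all
  rw [conv_apply, this, lTensor_counit_comul]
  simp

lemma conv_assoc (f g h : C →ₗ[K] K) : conv (conv f g) h = conv f (conv g h) := by
  ext c
  have e1 : ∀ w : C ⊗[K] C, TensorProduct.map (conv f g) h w =
      TensorProduct.map (TensorProduct.lid K K).toLinearMap h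
        (TensorProduct.map (TensorProduct.map f g) LinearMap.id (rTensor C comul w)) := by
    intro w
    induction w using TensorProduct.induction_on with
    | zero => simp
    | tmul a b => simp [conv_apply]
    | add x y hx hy => simp_all
  have e2 : ∀ w : C ⊗[K] C, TensorProduct.map f (conv g h) w =
      TensorProduct.map LinearMap.id (TensorProduct.lid K K).toLinearMap
        (TensorProduct.map f (TensorProduct.map g h) (lTensor C comul w)) := by
    intro w
    induction w using TensorProduct.induction_on with
    | zero => simp
    | tmul a b => simp [conv_apply]
    | add x y hx hy => simp_all
  rw [conv_apply, conv_apply, e1, e2]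
  rw [show lTensor C comul (comul (R := K) c) = TensorProduct.assoc K C C C
        (rTensor C comul (comul c)) from (coassoc_apply c).symm]
  generalize rTensor C (comul (R := K)) (comul (R := K) c) = w
  induction w using TensorProduct.induction_on with
  | zero => simp
  | tmul a b =>
    induction a using TensorProduct.induction_on with
    | zero => simp
    | tmul a1 a2 => simp [mul_assoc]
    | add x y hx hy => simp_all [add_tmul]
  | add x y hx hy => simp_all

lemma conv_inv_unique {f g g' : C →ₗ[K] K} (h1 : conv f g = counit)
    (h2 : conv g' f = counit) : g' = g := by
  have : conv g' (conv f g) = conv (conv g' f) g := (conv_assoc g' f g).symm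
  rw [h1, h2, conv_counit_right, conv_counit_left] at this
  exact this

variable {D : Type*} [AddCommMonoid D] [Module K D] [Coalgebra K D]

lemma conv_comp (f g : D →ₗ[K] K) (Φ : C →ₗ[K] D)
    (hΦ : comul ∘ₗ Φ = TensorProduct.map Φ Φ ∘ₗ comul) :
    conv (f ∘ₗ Φ) (g ∘ₗ Φ) = conv f g ∘ₗ Φ := by
  unfold conv
  rw [LinearMap.comp_assoc, LinearMap.comp_assoc, hΦ, TensorProduct.map_comp]
  rfl

end Conv

section CM

variable {M N P : Type*} [AddCommMonoid M] [AddCommMonoid N] [AddCommMonoid P]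
  [Module K M] [Module K N] [Module K P] [Coalgebra K M] [Coalgebra K N] [Coalgebra K P]

/-- a linear map being a coalgebra morphism -/
def IsCM (φ : M →ₗ[K] N) : Prop :=
  Coalgebra.comul ∘ₗ φ = TensorProduct.map φ φ ∘ₗ Coalgebra.comul ∧
    Coalgebra.counit ∘ₗ φ = Coalgebra.counit

lemma isCM_id : IsCM (K := K) (LinearMap.id : M →ₗ[K] M) := by
  constructor <;> simp [TensorProduct.map_id]

lemma IsCM.comp {φ : M →ₗ[K] N} {ψ : N →ₗ[K] P} (hψ : IsCM ψ) (hφ : IsCM φ) :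
    IsCM (ψ ∘ₗ φ) := by
  constructor
  · rw [← LinearMap.comp_assoc, hψ.1, LinearMap.comp_assoc, hφ.1,
      ← LinearMap.comp_assoc, ← TensorProduct.map_comp]
  · rw [← LinearMap.comp_assoc, hψ.2, hφ.2]

variable {M' N' : Type*} [AddCommMonoid M'] [AddCommMonoid N']
  [Module K M'] [Module K N'] [Coalgebra K M'] [Coalgebra K N']

lemma ttc_natural (φ : M →ₗ[K] M') (ψ : N →ₗ[K] N') :
    (TensorProduct.tensorTensorTensorComm K M' M' N' N').toLinearMap ∘ₗ
        TensorProduct.map (TensorProduct.map φ φ) (TensorProduct.map ψ ψ) =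
      TensorProduct.map (TensorProduct.map φ ψ) (TensorProduct.map φ ψ) ∘ₗ
        (TensorProduct.tensorTensorTensorComm K M M N N).toLinearMap := by
  ext m m' n n'
  simp

lemma IsCM.tmap {φ : M →ₗ[K] M'} {ψ : N →ₗ[K] N'} (hφ : IsCM φ) (hψ : IsCM ψ) :
    IsCM (TensorProduct.map φ ψ) := by
  constructor
  · show ((TensorProduct.tensorTensorTensorComm K M' M' N' N').toLinearMap ∘ₗ
      TensorProduct.map comul comul) ∘ₗ TensorProduct.map φ ψ = _
    rw [LinearMap.comp_assoc, ← TensorProduct.map_comp, hφ.1, hψ.1,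
      TensorProduct.map_comp, ← LinearMap.comp_assoc, ttc_natural]
    rfl
  · show ((TensorProduct.lid K K).toLinearMap ∘ₗ
      TensorProduct.map counit counit) ∘ₗ TensorProduct.map φ ψ = _
    rw [LinearMap.comp_assoc, ← TensorProduct.map_comp, hφ.2, hψ.2]
    rfl

lemma isCM_counit : IsCM (Coalgebra.counit : M →ₗ[K] K) := by
  constructor
  · ext m
    show comul (R := K) (counit (R := K) m) =
      TensorProduct.map counit counit (comul m)
    have h1 : TensorProduct.map (counit (R := K)) (counit (R := K)) (comul m)
        = rTensor K counit (lTensor M counit (comul m)) := by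
      generalize comul (R := K) m = w
      induction w using TensorProduct.induction_on with
      | zero => simp
      | tmul a b => simp
      | add x y hx hy => simp_all
    rw [h1, lTensor_counit_comul]
    show (1 : K) ⊗ₜ[K] counit (R := K) m = counit (R := K) m ⊗ₜ[K] (1 : K)
    calc (1:K) ⊗ₜ[K] counit (R := K) m
        = counit (R := K) m • ((1:K) ⊗ₜ[K] (1:K)) := by
          rw [← TensorProduct.tmul_smul, smul_eq_mul, mul_one]
      _ = counit (R := K) m ⊗ₜ[K] (1:K) := by
          rw [TensorProduct.smul_tmul', smul_eq_mul, mul_one]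
  · ext m; rfl

lemma isCM_lid : IsCM ((TensorProduct.lid K M).toLinearMap) := by
  constructor
  · apply TensorProduct.ext'
    intro c m
    show comul (R := K) ((TensorProduct.lid K M) (c ⊗ₜ m)) = _
    rw [TensorProduct.lid_tmul, map_smul]
    show c • comul (R := K) m =
      TensorProduct.map (TensorProduct.lid K M).toLinearMap (TensorProduct.lid K M).toLinearMap
        (TensorProduct.tensorTensorTensorComm K K K M M (((1:K) ⊗ₜ[K] c) ⊗ₜ comul m))
    generalize comul (R := K) m = w
    induction w using TensorProduct.induction_on with
    | zero => simp
    | tmul a b =>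
      simp only [TensorProduct.tensorTensorTensorComm_tmul, TensorProduct.map_tmul,
        LinearEquiv.coe_coe, TensorProduct.lid_tmul, one_smul, TensorProduct.tmul_smul]
    | add x y hx hy => simp_all [TensorProduct.tmul_add, smul_add]
  · apply TensorProduct.ext'
    intro c m
    show counit (R := K) ((TensorProduct.lid K M) (c ⊗ₜ m)) = counit (R := K) (c ⊗ₜ[K] m)
    rw [TensorProduct.lid_tmul, map_smul, counit_tmul]
    show c • counit (R := K) m = counit (R := K) (c : K) * counit (R := K) m
    rw [CommSemiring.counit_apply, smul_eq_mul]

lemma isCM_rid : IsCM ((TensorProduct.rid K M).toLinearMap) := by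
  constructor
  · apply TensorProduct.ext'
    intro m c
    show comul (R := K) ((TensorProduct.rid K M) (m ⊗ₜ c)) = _
    rw [TensorProduct.rid_tmul, map_smul]
    show c • comul (R := K) m =
      TensorProduct.map (TensorProduct.rid K M).toLinearMap (TensorProduct.rid K M).toLinearMap
        (TensorProduct.tensorTensorTensorComm K M M K K ((comul m) ⊗ₜ ((1:K) ⊗ₜ[K] c)))
    generalize comul (R := K) m = w
    induction w using TensorProduct.induction_on with
    | zero => simp
    | tmul a b =>
      simp only [TensorProduct.tensorTensorTensorComm_tmul, TensorProduct.map_tmul,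
        LinearEquiv.coe_coe, TensorProduct.rid_tmul, one_smul, TensorProduct.tmul_smul]
    | add x y hx hy => simp_all [TensorProduct.add_tmul, smul_add]
  · apply TensorProduct.ext'
    intro m c
    show counit (R := K) ((TensorProduct.rid K M) (m ⊗ₜ c)) = counit (R := K) (m ⊗ₜ[K] c)
    rw [TensorProduct.rid_tmul, map_smul, counit_tmul]
    show c • counit (R := K) m = counit (R := K) m * counit (R := K) (c : K)
    rw [CommSemiring.counit_apply, smul_eq_mul, mul_comm]

set_option maxHeartbeats 1000000 in
lemma isCM_assoc_symm :
    IsCM ((TensorProduct.assoc K M N P).symm.toLinearMap) := by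
  constructor
  · apply TensorProduct.ext'
    intro m q
    induction q using TensorProduct.induction_on with
    | zero => simp
    | tmul n p =>
      show comul (R := K) ((TensorProduct.assoc K M N P).symm (m ⊗ₜ (n ⊗ₜ p))) =
        TensorProduct.map (TensorProduct.assoc K M N P).symm.toLinearMap
          (TensorProduct.assoc K M N P).symm.toLinearMap (comul (m ⊗ₜ (n ⊗ₜ p)))
      rw [TensorProduct.assoc_symm_tmul]
      show TensorProduct.tensorTensorTensorComm K (M ⊗[K] N) (M ⊗[K] N) P P
          ((TensorProduct.tensorTensorTensorComm K M M N N
            ((comul m) ⊗ₜ (comul n))) ⊗ₜ (comul p)) =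
        TensorProduct.map (TensorProduct.assoc K M N P).symm.toLinearMap
          (TensorProduct.assoc K M N P).symm.toLinearMap
          (TensorProduct.tensorTensorTensorComm K M M (N ⊗[K] P) (N ⊗[K] P)
            ((comul m) ⊗ₜ (TensorProduct.tensorTensorTensorComm K N N P P
              ((comul n) ⊗ₜ (comul p)))))
      generalize comul (R := K) m = u
      generalize comul (R := K) n = v
      generalize comul (R := K) p = w
      induction u using TensorProduct.induction_on with
      | zero => simp only [zero_tmul, map_zero]
      | tmul m1 m2 =>
        induction v using TensorProduct.induction_on with
        | zero => simp only [zero_tmul, tmul_zero, map_zero]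
        | tmul n1 n2 =>
          induction w using TensorProduct.induction_on with
          | zero => simp only [tmul_zero, map_zero]
          | tmul p1 p2 =>
            simp only [TensorProduct.tensorTensorTensorComm_tmul, TensorProduct.map_tmul,
              LinearEquiv.coe_coe, TensorProduct.assoc_symm_tmul]
          | add x y hx hy =>
            simp only [tmul_add, map_add] at hx hy ⊢
            rw [hx, hy]
        | add x y hx hy =>
          simp only [tmul_add, add_tmul, map_add] at hx hy ⊢
          rw [hx, hy]
      | add x y hx hy =>
        simp only [tmul_add, add_tmul, map_add] at hx hy ⊢
        rw [hx, hy]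
    | add x y hx hy =>
      simp only [tmul_add, map_add] at hx hy ⊢
      rw [hx, hy]
  · apply TensorProduct.ext'
    intro m q
    induction q using TensorProduct.induction_on with
    | zero => simp
    | tmul n p =>
      show counit (R := K) ((TensorProduct.assoc K M N P).symm (m ⊗ₜ (n ⊗ₜ p))) =
        counit (R := K) (m ⊗ₜ (n ⊗ₜ p))
      rw [TensorProduct.assoc_symm_tmul]
      rw [counit_tmul, counit_tmul, counit_tmul, counit_tmul, mul_assoc]
    | add x y hx hy =>
      simp only [tmul_add, map_add] at hx hy ⊢
      rw [hx, hy]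

end CM

section Bi

variable {A : Type*} [Ring A] [Bialgebra K A]

lemma mul_ttc (u v : A ⊗[K] A) :
    TensorProduct.map (LinearMap.mul' K A) (LinearMap.mul' K A)
        (TensorProduct.tensorTensorTensorComm K A A A A (u ⊗ₜ v)) = u * v := by
  induction u using TensorProduct.induction_on with
  | zero => simp
  | tmul a b =>
    induction v using TensorProduct.induction_on with
    | zero => simp
    | tmul c d => simp [Algebra.TensorProduct.tmul_mul_tmul]
    | add x y hx hy => simp_all [tmul_add, mul_add]
  | add x y hx hy => simp_all [add_tmul, add_mul]

lemma isCM_mul : IsCM (LinearMap.mul' K A) := by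
  constructor
  · apply TensorProduct.ext'
    intro a b
    show comul (R := K) (LinearMap.mul' K A (a ⊗ₜ b)) =
      TensorProduct.map (LinearMap.mul' K A) (LinearMap.mul' K A)
        (TensorProduct.tensorTensorTensorComm K A A A A (comul a ⊗ₜ comul b))
    rw [LinearMap.mul'_apply, mul_ttc, Bialgebra.comul_mul]
  · apply TensorProduct.ext'
    intro a b
    show counit (R := K) (LinearMap.mul' K A (a ⊗ₜ b)) = counit (R := K) (a ⊗ₜ[K] b)
    rw [LinearMap.mul'_apply, Bialgebra.counit_mul, counit_tmul]

end Bi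

end HCAux

namespace HCAux

section ExtHelpers

variable {K : Type*} [CommRing K]
variable {M N P Q R : Type*} [AddCommMonoid M] [AddCommMonoid N] [AddCommMonoid P]
  [AddCommMonoid Q] [AddCommMonoid R] [Module K M] [Module K N] [Module K P]
  [Module K Q] [Module K R]

lemma ext3r {f g : M ⊗[K] (N ⊗[K] P) →ₗ[K] Q}
    (h : ∀ (m : M) (n : N) (p : P), f (m ⊗ₜ (n ⊗ₜ p)) = g (m ⊗ₜ (n ⊗ₜ p))) : f = g := by
  apply TensorProduct.ext'
  intro m w
  induction w using TensorProduct.induction_on with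
  | zero => simp
  | tmul n p => exact h m n p
  | add x y hx hy => rw [TensorProduct.tmul_add, map_add, map_add, hx, hy]

lemma ext22 {f g : (M ⊗[K] N) ⊗[K] (P ⊗[K] Q) →ₗ[K] R}
    (h : ∀ (m : M) (n : N) (p : P) (q : Q),
      f ((m ⊗ₜ n) ⊗ₜ (p ⊗ₜ q)) = g ((m ⊗ₜ n) ⊗ₜ (p ⊗ₜ q))) : f = g := by
  apply TensorProduct.ext'
  intro u v
  induction u using TensorProduct.induction_on with
  | zero => simp
  | tmul m n =>
    induction v using TensorProduct.induction_on with
    | zero => simp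
    | tmul p q => exact h m n p q
    | add x y hx hy => rw [TensorProduct.tmul_add, map_add, map_add, hx, hy]
  | add x y hx hy => rw [TensorProduct.add_tmul, map_add, map_add, hx, hy]

end ExtHelpers

end HCAux

section Bridge

variable [CommRing K] [Ring A] [Bialgebra K A]

lemma conv2_eq_conv (f g : (A ⊗[K] A) →ₗ[K] K) : conv2 f g = HCAux.conv f g := rfl

lemma counit2_eq : counit2 (K := K) (A := A) = Coalgebra.counit := rfl

lemma conv3_eq_conv (f g : (A ⊗[K] (A ⊗[K] A)) →ₗ[K] K) : conv3 f g = HCAux.conv f g := rfl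

end Bridge

open HCAux in
/-- Let `σ : H → A` be a bialgebra monomorphism from a Hopf algebra `H`
to a bialgebra `A`, and let `γ` be an `H`-bilinear unital 2-cocycle for `A`, with
convolution inverse `γinv`. Then (i) `γ` is `H`-balanced and (ii) `γ⁻¹` is also
`H`-bilinear and `H`-balanced. -/
theorem hbilinear_cocycle_balanced [CommRing K] [Ring A] [Bialgebra K A]
    [Ring H] [HopfAlgebra K H] (σ : H →ₐc[K] A) (hσ : Function.Injective σ)
    (γ γinv : (A ⊗[K] A) →ₗ[K] K)
    (hγc : IsCocycleEq γ) (hγu : IsUnital γ)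
    (hγinv₁ : conv2 γ γinv = counit2) (hγinv₂ : conv2 γinv γ = counit2)
    (hbil : ∀ (h h' : H) (x y : A),
      γ ((σ h * x) ⊗ₜ[K] (y * σ h')) =
        Coalgebra.counit (R := K) h * γ (x ⊗ₜ[K] y) * Coalgebra.counit (R := K) h') :
    (∀ (h : H) (x y : A), γ ((x * σ h) ⊗ₜ[K] y) = γ (x ⊗ₜ[K] (σ h * y))) ∧
    (∀ (h h' : H) (x y : A),
      γinv ((σ h * x) ⊗ₜ[K] (y * σ h')) =
        Coalgebra.counit (R := K) h * γinv (x ⊗ₜ[K] y) *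
          Coalgebra.counit (R := K) h') ∧
    (∀ (h : H) (x y : A), γinv ((x * σ h) ⊗ₜ[K] y) = γinv (x ⊗ₜ[K] (σ h * y))) := by
  classical
  have hσ1 : σ (1 : H) = (1 : A) := map_one σ
  have hε1H : Coalgebra.counit (R := K) (1 : H) = 1 := Bialgebra.counit_one
  have hL : ∀ (h : H) (y : A), γ (σ h ⊗ₜ[K] y) =
      Coalgebra.counit (R := K) h * Coalgebra.counit (R := K) y := by
    intro h y
    have := hbil h 1 1 y
    rw [hσ1, mul_one, mul_one, hε1H, mul_one, (hγu y).2] at this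
    exact this
  have hR : ∀ (x : A) (h : H), γ (x ⊗ₜ[K] σ h) =
      Coalgebra.counit (R := K) x * Coalgebra.counit (R := K) h := by
    intro x h
    have := hbil 1 h x 1
    rw [hσ1, one_mul, one_mul, hε1H, one_mul, (hγu x).1] at this
    rw [this, mul_comm]
  set σL : H →ₗ[K] A := (σ : H →ₗ[K] A) with hσL
  have hσapp : ∀ h : H, σL h = σ h := fun _ => rfl
  have hσCM : HCAux.IsCM σL :=
    ⟨(CoalgHomClass.map_comp_comul σ).symm, CoalgHomClass.counit_comp σ⟩
  set m1 : H ⊗[K] A →ₗ[K] A := LinearMap.mul' K A ∘ₗ TensorProduct.map σL LinearMap.id with hm1d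
  set m2 : A ⊗[K] H →ₗ[K] A := LinearMap.mul' K A ∘ₗ TensorProduct.map LinearMap.id σL with hm2d
  have hm1 : HCAux.IsCM m1 := HCAux.isCM_mul.comp (hσCM.tmap HCAux.isCM_id)
  have hm2 : HCAux.IsCM m2 := HCAux.isCM_mul.comp (HCAux.isCM_id.tmap hσCM)
  -- Part (i)
  have key1 : ∀ (h : H) (x y : A), γ ((x * σ h) ⊗ₜ[K] y) = γ (x ⊗ₜ[K] (σ h * y)) := by
    set Θ : A ⊗[K] (H ⊗[K] A) →ₗ[K] A ⊗[K] (A ⊗[K] A) :=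
      TensorProduct.map LinearMap.id (TensorProduct.map σL LinearMap.id) with hΘd
    have hΘ : HCAux.IsCM Θ := HCAux.isCM_id.tmap (hσCM.tmap HCAux.isCM_id)
    set F1 : (A ⊗[K] (A ⊗[K] A)) →ₗ[K] K :=
      (TensorProduct.lid K K).toLinearMap ∘ₗ TensorProduct.map Coalgebra.counit γ with hF1
    set G1 : (A ⊗[K] (A ⊗[K] A)) →ₗ[K] K :=
      γ ∘ₗ TensorProduct.map LinearMap.id (LinearMap.mul' K A) with hG1
    set F2 : (A ⊗[K] (A ⊗[K] A)) →ₗ[K] K :=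
      ((TensorProduct.lid K K).toLinearMap ∘ₗ TensorProduct.map γ Coalgebra.counit)
        ∘ₗ (TensorProduct.assoc K A A A).symm.toLinearMap with hF2
    set G2 : (A ⊗[K] (A ⊗[K] A)) →ₗ[K] K :=
      (γ ∘ₗ TensorProduct.map (LinearMap.mul' K A) LinearMap.id) ∘ₗ
        (TensorProduct.assoc K A A A).symm.toLinearMap with hG2
    have hcoc : HCAux.conv F1 G1 = HCAux.conv F2 G2 := by
      rw [← conv3_eq_conv, ← conv3_eq_conv]
      exact hγc
    have e1 : F1 ∘ₗ Θ = Coalgebra.counit := by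
      apply HCAux.ext3r
      intro x h y
      simp only [hΘd, hF1, LinearMap.comp_apply, TensorProduct.map_tmul, LinearMap.id_coe,
        id_eq, LinearEquiv.coe_coe, TensorProduct.lid_tmul, HCAux.counit_tmul, hσapp]
      rw [hL, smul_eq_mul]
    have e2 : F2 ∘ₗ Θ = Coalgebra.counit := by
      apply HCAux.ext3r
      intro x h y
      simp only [hΘd, hF2, LinearMap.comp_apply, TensorProduct.map_tmul, LinearMap.id_coe,
        id_eq, LinearEquiv.coe_coe, TensorProduct.assoc_symm_tmul, TensorProduct.lid_tmul,
        HCAux.counit_tmul, hσapp]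
      rw [hR, smul_eq_mul, mul_assoc]
    have c1 : HCAux.conv (F1 ∘ₗ Θ) (G1 ∘ₗ Θ) = HCAux.conv F1 G1 ∘ₗ Θ :=
      HCAux.conv_comp _ _ Θ hΘ.1
    have c2 : HCAux.conv (F2 ∘ₗ Θ) (G2 ∘ₗ Θ) = HCAux.conv F2 G2 ∘ₗ Θ :=
      HCAux.conv_comp _ _ Θ hΘ.1
    have step : G1 ∘ₗ Θ = G2 ∘ₗ Θ := by
      calc G1 ∘ₗ Θ = HCAux.conv Coalgebra.counit (G1 ∘ₗ Θ) :=
            (HCAux.conv_counit_left _).symm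
        _ = HCAux.conv (F1 ∘ₗ Θ) (G1 ∘ₗ Θ) := by rw [e1]
        _ = HCAux.conv F1 G1 ∘ₗ Θ := c1
        _ = HCAux.conv F2 G2 ∘ₗ Θ := by rw [hcoc]
        _ = HCAux.conv (F2 ∘ₗ Θ) (G2 ∘ₗ Θ) := c2.symm
        _ = HCAux.conv Coalgebra.counit (G2 ∘ₗ Θ) := by rw [e2]
        _ = G2 ∘ₗ Θ := HCAux.conv_counit_left _
    intro h x y
    have hxx := LinearMap.congr_fun step (x ⊗ₜ[K] (h ⊗ₜ[K] y))
    simp only [hΘd, hG1, hG2, LinearMap.comp_apply, TensorProduct.map_tmul, LinearMap.id_coe,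
      id_eq, LinearEquiv.coe_coe, TensorProduct.assoc_symm_tmul, LinearMap.mul'_apply,
      hσapp] at hxx
    exact hxx.symm
  -- Part (ii)
  have key2 : ∀ (h h' : H) (x y : A),
      γinv ((σ h * x) ⊗ₜ[K] (y * σ h')) =
        Coalgebra.counit (R := K) h * γinv (x ⊗ₜ[K] y) * Coalgebra.counit (R := K) h' := by
    set Φ : (H ⊗[K] A) ⊗[K] (A ⊗[K] H) →ₗ[K] A ⊗[K] A := TensorProduct.map m1 m2 with hΦd
    have hΦ : HCAux.IsCM Φ := hm1.tmap hm2
    set p : H ⊗[K] A →ₗ[K] A := (TensorProduct.lid K A).toLinearMap ∘ₗ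
      TensorProduct.map Coalgebra.counit LinearMap.id with hpd
    set q : A ⊗[K] H →ₗ[K] A := (TensorProduct.rid K A).toLinearMap ∘ₗ
      TensorProduct.map LinearMap.id Coalgebra.counit with hqd
    have hp : HCAux.IsCM p := HCAux.isCM_lid.comp (HCAux.isCM_counit.tmap HCAux.isCM_id)
    have hq : HCAux.IsCM q := HCAux.isCM_rid.comp (HCAux.isCM_id.tmap HCAux.isCM_counit)
    set P : (H ⊗[K] A) ⊗[K] (A ⊗[K] H) →ₗ[K] A ⊗[K] A := TensorProduct.map p q with hPd
    have hP : HCAux.IsCM P := hp.tmap hq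
    have hγΦP : γ ∘ₗ Φ = γ ∘ₗ P := by
      apply HCAux.ext22
      intro h x y h'
      simp only [hΦd, hPd, hpd, hqd, hm1d, hm2d, LinearMap.comp_apply, TensorProduct.map_tmul,
        LinearMap.id_coe, id_eq, LinearEquiv.coe_coe, TensorProduct.lid_tmul,
        TensorProduct.rid_tmul, LinearMap.mul'_apply, hσapp]
      rw [hbil, ← TensorProduct.smul_tmul', TensorProduct.tmul_smul, map_smul, map_smul,
        smul_eq_mul, smul_eq_mul]
      ring
    have c1 : HCAux.conv (γ ∘ₗ Φ) (γinv ∘ₗ Φ) = Coalgebra.counit := by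
      rw [HCAux.conv_comp _ _ Φ hΦ.1, ← conv2_eq_conv, hγinv₁, counit2_eq, hΦ.2]
    have c2 : HCAux.conv (γinv ∘ₗ P) (γ ∘ₗ Φ) = Coalgebra.counit := by
      rw [hγΦP, HCAux.conv_comp _ _ P hP.1, ← conv2_eq_conv, hγinv₂, counit2_eq, hP.2]
    have huniq : γinv ∘ₗ P = γinv ∘ₗ Φ := HCAux.conv_inv_unique c1 c2
    intro h h' x y
    have hxx := LinearMap.congr_fun huniq ((h ⊗ₜ[K] x) ⊗ₜ[K] (y ⊗ₜ[K] h'))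
    simp only [hΦd, hPd, hpd, hqd, hm1d, hm2d, LinearMap.comp_apply, TensorProduct.map_tmul,
      LinearMap.id_coe, id_eq, LinearEquiv.coe_coe, TensorProduct.lid_tmul,
      TensorProduct.rid_tmul, LinearMap.mul'_apply, hσapp] at hxx
    rw [← TensorProduct.smul_tmul', TensorProduct.tmul_smul, map_smul, map_smul,
      smul_eq_mul, smul_eq_mul] at hxx
    rw [← hxx]
    ring
  -- Part (iii)
  have key3 : ∀ (h : H) (x y : A), γinv ((x * σ h) ⊗ₜ[K] y) = γinv (x ⊗ₜ[K] (σ h * y)) := by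
    set Φ₁ : A ⊗[K] (H ⊗[K] A) →ₗ[K] A ⊗[K] A :=
      (TensorProduct.map m2 LinearMap.id) ∘ₗ (TensorProduct.assoc K A H A).symm.toLinearMap
      with hΦ₁d
    have hΦ₁ : HCAux.IsCM Φ₁ := (hm2.tmap HCAux.isCM_id).comp HCAux.isCM_assoc_symm
    set Φ₂ : A ⊗[K] (H ⊗[K] A) →ₗ[K] A ⊗[K] A := TensorProduct.map LinearMap.id m1 with hΦ₂d
    have hΦ₂ : HCAux.IsCM Φ₂ := HCAux.isCM_id.tmap hm1
    have hγ12 : γ ∘ₗ Φ₁ = γ ∘ₗ Φ₂ := by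
      apply HCAux.ext3r
      intro x h y
      simp only [hΦ₁d, hΦ₂d, hm1d, hm2d, LinearMap.comp_apply, TensorProduct.map_tmul,
        LinearMap.id_coe, id_eq, LinearEquiv.coe_coe, TensorProduct.assoc_symm_tmul,
        LinearMap.mul'_apply, hσapp]
      exact key1 h x y
    have c1 : HCAux.conv (γ ∘ₗ Φ₁) (γinv ∘ₗ Φ₁) = Coalgebra.counit := by
      rw [HCAux.conv_comp _ _ Φ₁ hΦ₁.1, ← conv2_eq_conv, hγinv₁, counit2_eq, hΦ₁.2]
    have c2 : HCAux.conv (γinv ∘ₗ Φ₂) (γ ∘ₗ Φ₁) = Coalgebra.counit := by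
      rw [hγ12, HCAux.conv_comp _ _ Φ₂ hΦ₂.1, ← conv2_eq_conv, hγinv₂, counit2_eq, hΦ₂.2]
    have huniq : γinv ∘ₗ Φ₂ = γinv ∘ₗ Φ₁ := HCAux.conv_inv_unique c1 c2
    intro h x y
    have hxx := LinearMap.congr_fun huniq (x ⊗ₜ[K] (h ⊗ₜ[K] y))
    simp only [hΦ₁d, hΦ₂d, hm1d, hm2d, LinearMap.comp_apply, TensorProduct.map_tmul,
      LinearMap.id_coe, id_eq, LinearEquiv.coe_coe, TensorProduct.assoc_symm_tmul,
      LinearMap.mul'_apply, hσapp] at hxx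
    exact hxx.symm
  exact ⟨key1, key2, key3⟩
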